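/- Let G1 and G2 be connected loopless graphs with the same edge set and the same number of vertices. If for every edge e the contracted graphs G1/e and G2/e are 2-isomorphic, then G1 and G2 are 2-isomorphic. -/

import Mathlib

open Finset

/-- A multigraph with vertex type `V`, edge-label type `α`, edge set `E`,
and an endpoints function assigning to each edge an unordered pair of vertices. -/
structure MGraph (V : Type) (α : Type) where
  E : Finset α
  ends : α → Sym2 V

namespace MGraph

variable {V V₁ V₂ : Type} {α : Type} [DecidableEq V] [DecidableEq V₁] [DecidableEq V₂]
  [DecidableEq α]

/-- `u` and `v` are joined by an edge of `X`. -/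
def Adj (G : MGraph V α) (X : Finset α) (u v : V) : Prop :=
  ∃ e ∈ X, G.ends e = s(u, v)

/-- `v` is incident with an edge of `X`. -/
def VIn (G : MGraph V α) (X : Finset α) (v : V) : Prop :=
  ∃ e ∈ X, v ∈ G.ends e

/-- The degree of `v` in the edge set `X` (loops count twice). -/
def degIn (G : MGraph V α) (X : Finset α) (v : V) : ℕ :=
  ∑ e ∈ X, (if G.ends e = s(v, v) then 2 else if v ∈ G.ends e then 1 else 0)

/-- `C` is the edge set of a cycle of `G`: a nonempty connected 2-regular subgraph. -/
def IsCycle (G : MGraph V α) (C : Finset α) : Prop :=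
  C.Nonempty ∧ C ⊆ G.E ∧ (∀ v, G.VIn C v → G.degIn C v = 2) ∧
    ∀ u v, G.VIn C u → G.VIn C v → Relation.ReflTransGen (G.Adj C) u v

/-- The subgraph on edge set `X` contains at least two (distinct) cycles. -/
def TwoCycles (G : MGraph V α) (X : Finset α) : Prop :=
  ∃ C₁ C₂ : Finset α, G.IsCycle C₁ ∧ G.IsCycle C₂ ∧ C₁ ⊆ X ∧ C₂ ⊆ X ∧ C₁ ≠ C₂

/-- `X` is a circuit of the bicircular lift matroid `L(G)`: a minimal edge set
containing at least two cycles. -/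
def LiftCircuit (G : MGraph V α) (X : Finset α) : Prop :=
  X ⊆ G.E ∧ G.TwoCycles X ∧ ∀ Y ⊂ X, ¬ G.TwoCycles Y

/-- `X` is independent in the bicircular lift matroid `L(G)`. -/
def LiftIndep (G : MGraph V α) (X : Finset α) : Prop :=
  X ⊆ G.E ∧ ∀ C ⊆ X, ¬ G.LiftCircuit C

/-- `L(G)` has at least two circuits. -/
def TwoLiftCircuits (G : MGraph V α) : Prop :=
  ∃ X Y : Finset α, G.LiftCircuit X ∧ G.LiftCircuit Y ∧ X ≠ Y

/-- Equality of the bicircular lift matroids `L(G₁) = L(G₂)` (equal ground sets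
and equal circuit collections). -/
def LiftEq (G₁ : MGraph V₁ α) (G₂ : MGraph V₂ α) : Prop :=
  G₁.E = G₂.E ∧ ∀ X : Finset α, G₁.LiftCircuit X ↔ G₂.LiftCircuit X

/-- `G₁` and `G₂` are 2-isomorphic, i.e. their graphic matroids on the common
edge set are equal (equivalently, they have the same cycles). -/
def TwoIso (G₁ : MGraph V₁ α) (G₂ : MGraph V₂ α) : Prop :=
  G₁.E = G₂.E ∧ ∀ X : Finset α, G₁.IsCycle X ↔ G₂.IsCycle X

/-- `G` has no loops. -/
def Loopless (G : MGraph V α) : Prop := ∀ e ∈ G.E, ¬ (G.ends e).IsDiag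

/-- `G` is connected. -/
def Connected (G : MGraph V α) : Prop :=
  ∀ u v : V, Relation.ReflTransGen (G.Adj G.E) u v

/-- `G` is 2-edge-connected: every edge lies in a cycle. -/
def TwoEdgeConnected (G : MGraph V α) : Prop :=
  ∀ e ∈ G.E, ∃ C : Finset α, G.IsCycle C ∧ e ∈ C

/-- `e` is a cut-edge of `G`: an edge contained in no cycle. -/
def IsCutEdge (G : MGraph V α) (e : α) : Prop :=
  e ∈ G.E ∧ ∀ C : Finset α, G.IsCycle C → e ∉ C

/-- Deletion of the edge `e` from `G`. -/
def delete (G : MGraph V α) (e : α) : MGraph V α :=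
  ⟨G.E.erase e, G.ends⟩

/-- Restriction of `G` to the edge set `X`. -/
def restrict (G : MGraph V α) (X : Finset α) : MGraph V α :=
  ⟨G.E ∩ X, G.ends⟩

/-- Contraction of the link `e` with endpoints `u, v`: the edge `e` is deleted
and the vertex `v` is identified with `u`. -/
def contractLink (G : MGraph V α) (e : α) (u v : V) : MGraph V α :=
  ⟨G.E.erase e, fun f => (G.ends f).map (fun w => if w = v then u else w)⟩

/-- `X` is a circuit of the contraction `M/e`, where `M` is the matroid with
circuit collection `Circ`: the circuits of `M/e` are the minimal nonempty sets of
the form `C \ {e}` with `C` a circuit of `M`. -/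
def ContractCircuit (Circ : Finset α → Prop) (e : α) (X : Finset α) : Prop :=
  (X.Nonempty ∧ ∃ C : Finset α, Circ C ∧ X = C.erase e) ∧
    ∀ Y ⊂ X, ¬ (Y.Nonempty ∧ ∃ C : Finset α, Circ C ∧ Y = C.erase e)

/-- `e` and `f` form a series pair: no cycle contains exactly one of them. -/
def SeriesPair (G : MGraph V α) (e f : α) : Prop :=
  e ∈ G.E ∧ f ∈ G.E ∧ ∀ C : Finset α, G.IsCycle C → (e ∈ C ↔ f ∈ C)

/-- `X` is a series class of `G`: a maximal set of pairwise series edges. -/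
def SeriesClass (G : MGraph V α) (X : Finset α) : Prop :=
  X ⊆ G.E ∧ X.Nonempty ∧ (∀ e ∈ X, ∀ f ∈ X, G.SeriesPair e f) ∧
    ∀ g ∈ G.E, (∀ e ∈ X, G.SeriesPair e g) → g ∈ X

/-- `G` is cosimple: no cut-edges and no nontrivial series classes. -/
def CoSimple (G : MGraph V α) : Prop :=
  (∀ e ∈ G.E, ¬ G.IsCutEdge e) ∧
    ∀ e ∈ G.E, ∀ f ∈ G.E, e ≠ f → ¬ G.SeriesPair e f

/-- `e` and `f` are parallel edges. -/
def Parallel (G : MGraph V α) (e f : α) : Prop :=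
  e ≠ f ∧ G.IsCycle {e, f}

/-- `P` is a parallel class of `G`: a maximal set of pairwise parallel non-loop
edges. -/
def ParallelClass (G : MGraph V α) (P : Finset α) : Prop :=
  P ⊆ G.E ∧ P.Nonempty ∧ (∀ e ∈ P, ¬ (G.ends e).IsDiag) ∧
    (∀ e ∈ P, ∀ f ∈ P, e ≠ f → G.Parallel e f) ∧
    ∀ g ∈ G.E, g ∉ P → ¬ (G.ends g).IsDiag → ∃ e ∈ P, ¬ G.Parallel e g

/-- `P` is the edge set of a path of `G`: nonempty, acyclic, connected, with all
degrees at most two. -/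
def IsPath (G : MGraph V α) (P : Finset α) : Prop :=
  P.Nonempty ∧ P ⊆ G.E ∧ (∀ C ⊆ P, ¬ G.IsCycle C) ∧
    (∀ v, G.VIn P v → G.degIn P v ≤ 2) ∧
    ∀ u v, G.VIn P u → G.VIn P v → Relation.ReflTransGen (G.Adj P) u v

/-- `P` is the edge set of a path of `G` with end-vertices `x` and `y`. -/
def PathBetween (G : MGraph V α) (P : Finset α) (x y : V) : Prop :=
  G.IsPath P ∧ x ≠ y ∧ G.degIn P x = 1 ∧ G.degIn P y = 1 ∧
    ∀ v, G.degIn P v = 1 → v = x ∨ v = y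

/-- `P` is the edge set of an ear of `G`: a path contained in a cycle, whose
internal vertices have degree two in `G` and whose end-vertices have degree at
least three in `G`. -/
def IsEar (G : MGraph V α) (P : Finset α) : Prop :=
  G.IsPath P ∧ (∀ v, G.degIn P v = 2 → G.degIn G.E v = 2) ∧
    (∀ v, G.degIn P v = 1 → 3 ≤ G.degIn G.E v) ∧
    ∃ C : Finset α, G.IsCycle C ∧ P ⊆ C

/-- `G` is a subdivision of `K_2^n`: two distinct branch vertices joined by `n`
internally disjoint paths whose edge sets partition `E(G)`. -/
def IsK2nSub (G : MGraph V α) (n : ℕ) : Prop :=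
  ∃ x y : V, x ≠ y ∧ ∃ P : Fin n → Finset α,
    (G.E = Finset.univ.biUnion fun i => P i) ∧
    (∀ i j : Fin n, i ≠ j → Disjoint (P i) (P j)) ∧
    (∀ i : Fin n, G.PathBetween (P i) x y) ∧
    (∀ i j : Fin n, i ≠ j → ∀ v, G.VIn (P i) v → G.VIn (P j) v → v = x ∨ v = y)

/-- `G` is a subdivision of `K_2^n` with the edge `e` lying on one of the `n`
paths. -/
def IsK2nSubThrough (G : MGraph V α) (n : ℕ) (e : α) : Prop :=
  ∃ x y : V, x ≠ y ∧ ∃ P : Fin n → Finset α,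
    (G.E = Finset.univ.biUnion fun i => P i) ∧
    (∀ i j : Fin n, i ≠ j → Disjoint (P i) (P j)) ∧
    (∀ i : Fin n, G.PathBetween (P i) x y) ∧
    (∀ i j : Fin n, i ≠ j → ∀ v, G.VIn (P i) v → G.VIn (P j) v → v = x ∨ v = y) ∧
    ∃ i : Fin n, e ∈ P i

/-- `T` is the edge set of a spanning tree of `G`. -/
def IsSpanningTree (G : MGraph V α) (T : Finset α) : Prop :=
  T ⊆ G.E ∧ (∀ C ⊆ T, ¬ G.IsCycle C) ∧
    ∀ u v : V, Relation.ReflTransGen (G.Adj T) u v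

end MGraph

namespace MGraph

variable {V : Type} {α : Type} [DecidableEq V] [DecidableEq α]

lemma sym2_rep (z : Sym2 V) : ∃ a b : V, z = s(a, b) :=
  Sym2.ind (fun a b => ⟨a, b, rfl⟩) z

/-- The summand in `degIn`. -/
def dterm (G : MGraph V α) (v : V) (e : α) : ℕ :=
  if G.ends e = s(v, v) then 2 else if v ∈ G.ends e then 1 else 0

lemma degIn_eq_sum (G : MGraph V α) (X : Finset α) (v : V) :
    G.degIn X v = ∑ e ∈ X, dterm G v e := rfl

lemma one_le_dterm {G : MGraph V α} {v : V} {e : α} (h : v ∈ G.ends e) :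
    1 ≤ dterm G v e := by
  unfold dterm
  split_ifs <;> omega

lemma dterm_eq_zero {G : MGraph V α} {v : V} {e : α} (h : v ∉ G.ends e) :
    dterm G v e = 0 := by
  have h1 : G.ends e ≠ s(v, v) := fun hq => h (by rw [hq]; exact Sym2.mem_mk_left v v)
  simp [dterm, h1, h]

lemma one_le_degIn {G : MGraph V α} {X : Finset α} {v : V} (h : G.VIn X v) :
    1 ≤ G.degIn X v := by
  obtain ⟨e, he, hv⟩ := h
  calc 1 ≤ dterm G v e := one_le_dterm hv
    _ ≤ _ := Finset.single_le_sum (f := fun e => dterm G v e) (fun i _ => Nat.zero_le _) he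

lemma not_vIn_of_degIn_eq_zero {G : MGraph V α} {X : Finset α} {v : V}
    (h : G.degIn X v = 0) : ¬ G.VIn X v := fun hv => by
  have := one_le_degIn hv; omega

lemma ends_contract (G : MGraph V α) (e : α) (u v : V) (f : α) :
    (G.contractLink e u v).ends f = (G.ends f).map (fun w => if w = v then u else w) := rfl

lemma dterm_contract_ne {G : MGraph V α} {e : α} {u v w : V} (hwu : w ≠ u) (hwv : w ≠ v)
    (f : α) : dterm (G.contractLink e u v) w f = dterm G w f := by
  obtain ⟨a, b, hab⟩ := sym2_rep (G.ends f)
  unfold dterm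
  rw [ends_contract, hab, Sym2.map_pair_eq]
  by_cases hav : a = v <;> by_cases hbv : b = v <;>
    simp [Sym2.eq_iff, Sym2.mem_iff, hav, hbv, hwu, hwv, Ne.symm hwu, Ne.symm hwv]

lemma dterm_contract_u {G : MGraph V α} {e : α} {u v : V} (huv : u ≠ v) {f : α}
    (hf : ¬ (G.ends f).IsDiag) :
    dterm (G.contractLink e u v) u f = dterm G u f + dterm G v f := by
  obtain ⟨a, b, hab⟩ := sym2_rep (G.ends f)
  have hne : a ≠ b := by rw [hab] at hf; simpa using hf
  unfold dterm
  rw [ends_contract, hab, Sym2.map_pair_eq]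
  by_cases hav : a = v <;> by_cases hbv : b = v <;>
    by_cases hau : a = u <;> by_cases hbu : b = u <;>
    simp [Sym2.eq_iff, Sym2.mem_iff, hav, hbv, hau, hbu, huv, Ne.symm huv, hne] <;> first | omega | (constructor <;> omega) | exact Ne.symm hbu | exact Ne.symm hau | exact absurd (hau.trans hav.symm) huv | simp_all [eq_comm]

lemma degIn_contract_ne {G : MGraph V α} {e : α} {u v w : V} (hwu : w ≠ u) (hwv : w ≠ v)
    (X : Finset α) : (G.contractLink e u v).degIn X w = G.degIn X w := by
  rw [degIn_eq_sum, degIn_eq_sum]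
  exact Finset.sum_congr rfl fun f _ => dterm_contract_ne hwu hwv f

lemma degIn_contract_u {G : MGraph V α} {e : α} {u v : V} (huv : u ≠ v) {X : Finset α}
    (hX : ∀ f ∈ X, ¬ (G.ends f).IsDiag) :
    (G.contractLink e u v).degIn X u = G.degIn X u + G.degIn X v := by
  rw [degIn_eq_sum, degIn_eq_sum, degIn_eq_sum, ← Finset.sum_add_distrib]
  exact Finset.sum_congr rfl fun f hf => dterm_contract_u huv (hX f hf)

lemma vIn_contract_of {G : MGraph V α} {e : α} {u v x : V} {X : Finset α}
    (h : G.VIn X x) : (G.contractLink e u v).VIn X (if x = v then u else x) := by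
  obtain ⟨f, hf, hx⟩ := h
  exact ⟨f, hf, by rw [ends_contract]; exact Sym2.mem_map.2 ⟨x, hx, rfl⟩⟩

lemma vIn_of_vIn_contract {G : MGraph V α} {e : α} {u v w : V} {X : Finset α}
    (h : (G.contractLink e u v).VIn X w) :
    ∃ x, G.VIn X x ∧ (if x = v then u else x) = w := by
  obtain ⟨f, hf, hw⟩ := h
  rw [ends_contract] at hw
  obtain ⟨x, hx, hxw⟩ := Sym2.mem_map.1 hw
  exact ⟨x, ⟨f, hf, hx⟩, hxw⟩

lemma not_vIn_contract_v {G : MGraph V α} {e : α} {u v : V} (huv : u ≠ v) (X : Finset α) :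
    ¬ (G.contractLink e u v).VIn X v := by
  intro h
  obtain ⟨x, _, hx⟩ := vIn_of_vIn_contract h
  by_cases hxv : x = v
  · rw [if_pos hxv] at hx; exact huv hx
  · rw [if_neg hxv] at hx; exact hxv hx

lemma reach_map {r s : V → V → Prop} {m : V → V}
    (h : ∀ a b, r a b → Relation.ReflTransGen s (m a) (m b)) :
    ∀ a b, Relation.ReflTransGen r a b → Relation.ReflTransGen s (m a) (m b) := by
  intro a b hab
  induction hab with
  | refl => exact .refl
  | tail _ h2 ih => exact ih.trans (h _ _ h2)

lemma adj_symm {G : MGraph V α} {X : Finset α} {a b : V} (h : G.Adj X a b) : G.Adj X b a := by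
  obtain ⟨f, hf, hab⟩ := h
  exact ⟨f, hf, by rw [hab, Sym2.eq_swap]⟩

lemma reach_symm {G : MGraph V α} {X : Finset α} {a b : V}
    (h : Relation.ReflTransGen (G.Adj X) a b) : Relation.ReflTransGen (G.Adj X) b a :=
  by
    induction h with
    | refl => exact .refl
    | tail _ h2 ih => exact (Relation.ReflTransGen.single (adj_symm h2)).trans ih

lemma reach_mono' {r s : V → V → Prop} (h : ∀ a b, r a b → Relation.ReflTransGen s a b) :
    ∀ a b, Relation.ReflTransGen r a b → Relation.ReflTransGen s a b := by
  intro a b hab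
  induction hab with
  | refl => exact .refl
  | tail _ h2 ih => exact ih.trans (h _ _ h2)

lemma degIn_eq_zero_of_not_vIn {G : MGraph V α} {X : Finset α} {w : V} (h : ¬ G.VIn X w) :
    G.degIn X w = 0 := by
  rw [degIn_eq_sum]
  exact Finset.sum_eq_zero fun f hf => dterm_eq_zero (fun hm => h ⟨f, hf, hm⟩)

lemma isCycle_subset_eq {G : MGraph V α} {C C' : Finset α} (hC : G.IsCycle C)
    (hC' : G.IsCycle C') (hsub : C' ⊆ C) : C' = C := by
  obtain ⟨hne, hCE, hdeg, hconn⟩ := hC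
  obtain ⟨hne', _, hdeg', _⟩ := hC'
  have key : ∀ w, G.VIn C' w → ∀ g ∈ C, w ∈ G.ends g → g ∈ C' := by
    intro w hw g hg hwg
    by_contra hg'
    obtain ⟨f0, hf0, hwf0⟩ := hw
    have hsplit : ∑ x ∈ C \ C', dterm G w x + ∑ x ∈ C', dterm G w x = ∑ x ∈ C, dterm G w x :=
      Finset.sum_sdiff hsub
    have h1 : G.degIn C w = 2 := hdeg w ⟨f0, hsub hf0, hwf0⟩
    have h2 : G.degIn C' w = 2 := hdeg' w ⟨f0, hf0, hwf0⟩
    rw [degIn_eq_sum] at h1 h2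
    have h0 : ∑ x ∈ C \ C', dterm G w x = 0 := by omega
    have hz := Finset.sum_eq_zero_iff.1 h0 g (Finset.mem_sdiff.2 ⟨hg, hg'⟩)
    have := one_le_dterm hwg
    omega
  have step : ∀ p q, G.Adj C p q → G.VIn C' p → G.VIn C' q := by
    intro p q hpq hp
    obtain ⟨g, hg, hgends⟩ := hpq
    have hgC' : g ∈ C' := key p hp g hg (by rw [hgends]; exact Sym2.mem_mk_left p q)
    exact ⟨g, hgC', by rw [hgends]; exact Sym2.mem_mk_right p q⟩
  obtain ⟨f0, hf0⟩ := hne'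
  obtain ⟨p0, q0, hp0⟩ := sym2_rep (G.ends f0)
  have hstart : G.VIn C' p0 := ⟨f0, hf0, by rw [hp0]; exact Sym2.mem_mk_left p0 q0⟩
  have hstartC : G.VIn C p0 := ⟨f0, hsub hf0, by rw [hp0]; exact Sym2.mem_mk_left p0 q0⟩
  have hall : ∀ b, Relation.ReflTransGen (G.Adj C) p0 b → G.VIn C' b := by
    intro b h
    induction h with
    | refl => exact hstart
    | tail _ h2 ih => exact step _ _ h2 ih
  refine Finset.Subset.antisymm hsub fun g hg => ?_
  obtain ⟨p, q, hpq⟩ := sym2_rep (G.ends g)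
  have hp : G.VIn C p := ⟨g, hg, by rw [hpq]; exact Sym2.mem_mk_left p q⟩
  exact key p (hall p (hconn p0 p hstartC hp)) g hg (by rw [hpq]; exact Sym2.mem_mk_left p q)

lemma isCycle_contract_erase {G : MGraph V α} (hl : G.Loopless) {C : Finset α}
    (hC : G.IsCycle C) {e : α} (he : e ∈ C) {u v : V} (hends : G.ends e = s(u, v))
    (huv : u ≠ v) : (G.contractLink e u v).IsCycle (C.erase e) := by
  obtain ⟨hne, hsub, hdeg, hconn⟩ := hC
  have hvInu : G.VIn C u := ⟨e, he, by rw [hends]; exact Sym2.mem_mk_left u v⟩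
  have hvInv : G.VIn C v := ⟨e, he, by rw [hends]; exact Sym2.mem_mk_right u v⟩
  have hdtu : dterm G u e = 1 := by
    unfold dterm; rw [hends]
    simp [Sym2.eq_iff, Sym2.mem_iff, huv, Ne.symm huv]
  have hdtv : dterm G v e = 1 := by
    unfold dterm; rw [hends]
    simp [Sym2.eq_iff, Sym2.mem_iff, huv, Ne.symm huv]
  have hdegu : ∑ x ∈ C.erase e, dterm G u x = 1 := by
    have h2 : G.degIn C u = 2 := hdeg u hvInu
    rw [degIn_eq_sum] at h2
    have h3 : dterm G u e + ∑ x ∈ C.erase e, dterm G u x = ∑ x ∈ C, dterm G u x :=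
      Finset.add_sum_erase C (fun x => dterm G u x) he
    omega
  have hdegv : ∑ x ∈ C.erase e, dterm G v x = 1 := by
    have h2 : G.degIn C v = 2 := hdeg v hvInv
    rw [degIn_eq_sum] at h2
    have h3 : dterm G v e + ∑ x ∈ C.erase e, dterm G v x = ∑ x ∈ C, dterm G v x :=
      Finset.add_sum_erase C (fun x => dterm G v x) he
    omega
  have hloop : ∀ f ∈ C.erase e, ¬ (G.ends f).IsDiag :=
    fun f hf => hl f (hsub (Finset.erase_subset e C hf))
  refine ⟨?_, Finset.erase_subset_erase e hsub, ?_, ?_⟩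
  · rw [Finset.nonempty_iff_ne_empty]
    intro hemp
    rw [hemp] at hdegu
    simp at hdegu
  · intro w hw
    by_cases hwv : w = v
    · rw [hwv] at hw
      exact absurd hw (not_vIn_contract_v huv _)
    by_cases hwu : w = u
    · rw [hwu]
      rw [degIn_contract_u huv hloop, degIn_eq_sum, degIn_eq_sum]
      omega
    · obtain ⟨x, hx, hxw⟩ := vIn_of_vIn_contract hw
      have hxV : x = w := by
        by_cases hxv : x = v
        · rw [if_pos hxv] at hxw; exact absurd hxw (Ne.symm hwu)
        · rwa [if_neg hxv] at hxw
      subst hxV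
      rw [degIn_contract_ne hwu hwv]
      have hVC : G.VIn C x := by
        obtain ⟨f, hf, h⟩ := hx
        exact ⟨f, Finset.erase_subset e C hf, h⟩
      have h2 : G.degIn C x = 2 := hdeg x hVC
      rw [degIn_eq_sum] at h2
      rw [degIn_eq_sum]
      have hz : dterm G x e = 0 :=
        dterm_eq_zero (by rw [hends]; simp [Sym2.mem_iff, hwu, hwv])
      have h3 : dterm G x e + ∑ y ∈ C.erase e, dterm G x y = ∑ y ∈ C, dterm G x y :=
        Finset.add_sum_erase C (fun y => dterm G x y) he
      omega
  · have step : ∀ p q, G.Adj C p q →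
        Relation.ReflTransGen ((G.contractLink e u v).Adj (C.erase e))
          (if p = v then u else p) (if q = v then u else q) := by
      intro p q hpq
      obtain ⟨g, hg, hgends⟩ := hpq
      by_cases hge : g = e
      · subst hge
        have huvpq : s(u, v) = s(p, q) := by rw [← hends, hgends]
        have hpq' : (p = u ∧ q = v) ∨ (p = v ∧ q = u) := by
          rw [Sym2.eq_iff] at huvpq; tauto
        have heq : (if p = v then u else p) = (if q = v then u else q) := by
          rcases hpq' with ⟨hp, hq⟩ | ⟨hp, hq⟩
          · subst hp; subst hq; rw [if_neg huv, if_pos rfl]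
          · subst hp; subst hq; rw [if_pos rfl, if_neg huv]
        rw [heq]
      · refine Relation.ReflTransGen.single ⟨g, Finset.mem_erase.2 ⟨hge, hg⟩, ?_⟩
        rw [ends_contract, hgends, Sym2.map_pair_eq]
    intro a b ha hb
    obtain ⟨x, hx, hxa⟩ := vIn_of_vIn_contract ha
    obtain ⟨y, hy, hyb⟩ := vIn_of_vIn_contract hb
    obtain ⟨fx, hfx, hxfx⟩ := hx
    obtain ⟨fy, hfy, hyfy⟩ := hy
    have hxC : G.VIn C x := ⟨fx, Finset.erase_subset e C hfx, hxfx⟩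
    have hyC : G.VIn C y := ⟨fy, Finset.erase_subset e C hfy, hyfy⟩
    have hr := reach_map step x y (hconn x y hxC hyC)
    rwa [hxa, hyb] at hr

lemma isCycle_of_contract {G : MGraph V α} (hl : G.Loopless) {e : α} (heE : e ∈ G.E)
    {u v : V} (hends : G.ends e = s(u, v)) (huv : u ≠ v) {D : Finset α}
    (hD : (G.contractLink e u v).IsCycle D) :
    G.IsCycle D ∨ G.IsCycle (insert e D) := by
  obtain ⟨hne, hsub, hdeg, hconn⟩ := hD
  have hsubE : D ⊆ G.E := fun f hf => Finset.mem_of_mem_erase (hsub hf)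
  have heD : e ∉ D := fun h => Finset.notMem_erase e G.E (hsub h)
  have hloop : ∀ f ∈ D, ¬ (G.ends f).IsDiag := fun f hf => hl f (hsubE hf)
  have hVtrans : ∀ w, w ≠ u → w ≠ v → (G.VIn D w ↔ (G.contractLink e u v).VIn D w) := by
    intro w hwu hwv
    constructor
    · intro h
      have := vIn_contract_of (e := e) (u := u) (v := v) h
      rwa [if_neg hwv] at this
    · intro h
      obtain ⟨x, hx, hxw⟩ := vIn_of_vIn_contract h
      have hxeq : x = w := by
        by_cases hxv : x = v
        · rw [if_pos hxv] at hxw; exact absurd hxw (Ne.symm hwu)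
        · rwa [if_neg hxv] at hxw
      rwa [hxeq] at hx
  have hVuD : G.VIn D u → (G.contractLink e u v).VIn D u := fun h => by
    have := vIn_contract_of (e := e) (u := u) (v := v) h
    rwa [if_neg huv] at this
  have hVvD : G.VIn D v → (G.contractLink e u v).VIn D u := fun h => by
    have := vIn_contract_of (e := e) (u := u) (v := v) h
    rwa [if_pos rfl] at this
  have hdegw : ∀ w, w ≠ u → w ≠ v → G.VIn D w → G.degIn D w = 2 := by
    intro w hwu hwv hw
    rw [← degIn_contract_ne (e := e) hwu hwv]
    exact hdeg w ((hVtrans w hwu hwv).1 hw)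
  by_cases hv : G.VIn D v
  · by_cases hu : G.VIn D u
    · -- both endpoints used : insert e D is a cycle of G
      right
      have hcu : (G.contractLink e u v).VIn D u := hVuD hu
      have hsum : G.degIn D u + G.degIn D v = 2 := by
        rw [← degIn_contract_u huv hloop]; exact hdeg u hcu
      have hu1 : G.degIn D u = 1 := by
        have := one_le_degIn hu; have := one_le_degIn hv; omega
      have hv1 : G.degIn D v = 1 := by
        have := one_le_degIn hu; have := one_le_degIn hv; omega
      have hdtu : dterm G u e = 1 := by
        unfold dterm; rw [hends]
        simp [Sym2.eq_iff, Sym2.mem_iff, huv, Ne.symm huv]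
      have hdtv : dterm G v e = 1 := by
        unfold dterm; rw [hends]
        simp [Sym2.eq_iff, Sym2.mem_iff, huv, Ne.symm huv]
      refine ⟨⟨e, Finset.mem_insert_self e D⟩, Finset.insert_subset heE hsubE, ?_, ?_⟩
      · intro w hw
        rw [degIn_eq_sum, Finset.sum_insert heD]
        by_cases hwu : w = u
        · rw [hwu, hdtu]
          rw [degIn_eq_sum] at hu1
          omega
        by_cases hwv : w = v
        · rw [hwv, hdtv]
          rw [degIn_eq_sum] at hv1
          omega
        · have hwD : G.VIn D w := by
            obtain ⟨f, hf, hwf⟩ := hw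
            rcases Finset.mem_insert.1 hf with rfl | hfD
            · exact absurd hwf (by rw [hends]; simp [Sym2.mem_iff, hwu, hwv])
            · exact ⟨f, hfD, hwf⟩
          have h2 := hdegw w hwu hwv hwD
          rw [degIn_eq_sum] at h2
          rw [dterm_eq_zero (by rw [hends]; simp [Sym2.mem_iff, hwu, hwv])]
          omega
      · have hRuv : G.Adj (insert e D) u v := ⟨e, Finset.mem_insert_self e D, hends⟩
        have hRsym : ∀ {p q}, Relation.ReflTransGen (G.Adj (insert e D)) p q →
            Relation.ReflTransGen (G.Adj (insert e D)) q p := fun h => reach_symm h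
        have hDR : ∀ p q, G.Adj D p q → G.Adj (insert e D) p q :=
          fun p q h => by obtain ⟨g, hg, hh⟩ := h; exact ⟨g, Finset.mem_insert_of_mem hg, hh⟩
        have hlift : ∀ p q, (G.contractLink e u v).Adj D p q →
            Relation.ReflTransGen (G.Adj (insert e D)) p q := by
          intro p q hpq
          obtain ⟨g, hg, hgends⟩ := hpq
          obtain ⟨a, b, hab⟩ := sym2_rep (G.ends g)
          rw [ends_contract, hab, Sym2.map_pair_eq] at hgends
          have hreach : ∀ x y : V, (if x = v then u else x) = y →
              Relation.ReflTransGen (G.Adj (insert e D)) y x := by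
            intro x y hxy
            by_cases hxv : x = v
            · rw [if_pos hxv] at hxy; subst hxy; subst hxv; exact .single hRuv
            · rw [if_neg hxv] at hxy; subst hxy; exact .refl
          have hab' : Relation.ReflTransGen (G.Adj (insert e D)) a b :=
            .single (hDR a b ⟨g, hg, hab⟩)
          rcases Sym2.eq_iff.1 hgends with ⟨h1, h2⟩ | ⟨h1, h2⟩
          · exact ((hreach a p h1).trans hab').trans (hRsym (hreach b q h2))
          · exact ((hreach b p h2).trans (hRsym hab')).trans (hRsym (hreach a q h1))
        have hreachu : ∀ x, G.VIn (insert e D) x →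
            Relation.ReflTransGen (G.Adj (insert e D)) x u := by
          intro x hx
          by_cases hxu : x = u
          · rw [hxu]
          by_cases hxv : x = v
          · rw [hxv]; exact .single (adj_symm hRuv)
          · have hxD : G.VIn D x := by
              obtain ⟨f, hf, hxf⟩ := hx
              rcases Finset.mem_insert.1 hf with rfl | hfD
              · exact absurd hxf (by rw [hends]; simp [Sym2.mem_iff, hxu, hxv])
              · exact ⟨f, hfD, hxf⟩
            have hcx : (G.contractLink e u v).VIn D x := (hVtrans x hxu hxv).1 hxD
            exact reach_mono' hlift x u (hconn x u hcx hcu)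
        intro x y hx hy
        exact (hreachu x hx).trans (hRsym (hreachu y hy))
    · -- v used, u unused : D is a cycle of G
      left
      have hcu : (G.contractLink e u v).VIn D u := hVvD hv
      have hsum : G.degIn D u + G.degIn D v = 2 := by
        rw [← degIn_contract_u huv hloop]; exact hdeg u hcu
      have hu0 : G.degIn D u = 0 := degIn_eq_zero_of_not_vIn hu
      refine ⟨hne, hsubE, ?_, ?_⟩
      · intro w hw
        by_cases hwu : w = u
        · exact absurd (hwu ▸ hw) hu
        by_cases hwv : w = v
        · rw [hwv]; omega
        · exact hdegw w hwu hwv hw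
      · have hstep : ∀ p q, (G.contractLink e u v).Adj D p q →
            Relation.ReflTransGen (G.Adj D) (if p = u then v else p) (if q = u then v else q) := by
          intro p q hpq
          obtain ⟨g, hg, hgends⟩ := hpq
          obtain ⟨a, b, hab⟩ := sym2_rep (G.ends g)
          rw [ends_contract, hab, Sym2.map_pair_eq] at hgends
          have hau : a ≠ u := fun h =>
            hu ⟨g, hg, by rw [hab, Sym2.mem_iff]; exact Or.inl h.symm⟩
          have hbu : b ≠ u := fun h =>
            hu ⟨g, hg, by rw [hab, Sym2.mem_iff]; exact Or.inr h.symm⟩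
          have hkey : ∀ x y : V, x ≠ u → (if x = v then u else x) = y →
              (if y = u then v else y) = x := by
            intro x y hxu hxy
            by_cases hxv : x = v
            · rw [if_pos hxv] at hxy; subst hxy; rw [if_pos rfl, hxv]
            · rw [if_neg hxv] at hxy; subst hxy; rw [if_neg hxu]
          rcases Sym2.eq_iff.1 hgends with ⟨h1, h2⟩ | ⟨h1, h2⟩
          · rw [hkey a p hau h1, hkey b q hbu h2]
            exact .single ⟨g, hg, hab⟩
          · rw [hkey b p hbu h2, hkey a q hau h1]
            exact .single (adj_symm ⟨g, hg, hab⟩)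
        intro x y hx hy
        have hxu : x ≠ u := fun h => hu (h ▸ hx)
        have hyu : y ≠ u := fun h => hu (h ▸ hy)
        have hcx : (G.contractLink e u v).VIn D (if x = v then u else x) := vIn_contract_of hx
        have hcy : (G.contractLink e u v).VIn D (if y = v then u else y) := vIn_contract_of hy
        have hr := reach_map hstep _ _ (hconn _ _ hcx hcy)
        have hfix : ∀ z : V, z ≠ u →
            (if (if z = v then u else z) = u then v else (if z = v then u else z)) = z := by
          intro z hzu
          by_cases hzv : z = v
          · rw [if_pos hzv, if_pos rfl, hzv]
          · rw [if_neg hzv, if_neg hzu]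
        rwa [hfix x hxu, hfix y hyu] at hr
  · -- v unused : D is a cycle of G
    left
    have hv0 : G.degIn D v = 0 := degIn_eq_zero_of_not_vIn hv
    refine ⟨hne, hsubE, ?_, ?_⟩
    · intro w hw
      by_cases hwv : w = v
      · exact absurd (hwv ▸ hw) hv
      by_cases hwu : w = u
      · have hcu := hVuD (hwu ▸ hw)
        have hsum : G.degIn D u + G.degIn D v = 2 := by
          rw [← degIn_contract_u huv hloop]; exact hdeg u hcu
        rw [hwu]
        omega
      · exact hdegw w hwu hwv hw
    · have hstep : ∀ p q, (G.contractLink e u v).Adj D p q →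
          Relation.ReflTransGen (G.Adj D) p q := by
        intro p q hpq
        obtain ⟨g, hg, hgends⟩ := hpq
        obtain ⟨a, b, hab⟩ := sym2_rep (G.ends g)
        rw [ends_contract, hab, Sym2.map_pair_eq] at hgends
        have hav : a ≠ v := fun h =>
          hv ⟨g, hg, by rw [hab, Sym2.mem_iff]; exact Or.inl h.symm⟩
        have hbv : b ≠ v := fun h =>
          hv ⟨g, hg, by rw [hab, Sym2.mem_iff]; exact Or.inr h.symm⟩
        rw [if_neg hav, if_neg hbv] at hgends
        exact .single ⟨g, hg, hab.trans hgends⟩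
      intro x y hx hy
      have hxv : x ≠ v := fun h => hv (h ▸ hx)
      have hyv : y ≠ v := fun h => hv (h ▸ hy)
      have hcx := vIn_contract_of (e := e) (u := u) (v := v) hx
      rw [if_neg hxv] at hcx
      have hcy := vIn_contract_of (e := e) (u := u) (v := v) hy
      rw [if_neg hyv] at hcy
      exact reach_mono' hstep x y (hconn x y hcx hcy)

lemma cycle_step {V₁ V₂ : Type} [DecidableEq V₁] [DecidableEq V₂]
    (G₁ : MGraph V₁ α) (G₂ : MGraph V₂ α)
    (hl₁ : G₁.Loopless) (hl₂ : G₂.Loopless) (hE : G₁.E = G₂.E)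
    (hcontr : ∀ e ∈ G₁.E, ∀ (u₁ v₁ : V₁) (u₂ v₂ : V₂),
      G₁.ends e = s(u₁, v₁) → G₂.ends e = s(u₂, v₂) →
      (G₁.contractLink e u₁ v₁).TwoIso (G₂.contractLink e u₂ v₂))
    {C : Finset α} (hC : G₁.IsCycle C) {e : α} (he : e ∈ C) :
    G₂.IsCycle C ∨ G₂.IsCycle (C.erase e) := by
  have heE : e ∈ G₁.E := hC.2.1 he
  have heE2 : e ∈ G₂.E := hE ▸ heE
  obtain ⟨u₁, v₁, h1⟩ := sym2_rep (G₁.ends e)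
  obtain ⟨u₂, v₂, h2⟩ := sym2_rep (G₂.ends e)
  have hne₁ : u₁ ≠ v₁ := fun h => hl₁ e heE (by rw [h1, h]; exact Sym2.mk_isDiag_iff.2 rfl)
  have hne₂ : u₂ ≠ v₂ := fun h => hl₂ e heE2 (by rw [h2, h]; exact Sym2.mk_isDiag_iff.2 rfl)
  have hcyc1 := isCycle_contract_erase hl₁ hC he h1 hne₁
  have hcyc2 := ((hcontr e heE u₁ v₁ u₂ v₂ h1 h2).2 (C.erase e)).1 hcyc1
  rcases isCycle_of_contract hl₂ heE2 h2 hne₂ hcyc2 with h | h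
  · right; exact h
  · left; rwa [Finset.insert_erase he] at h

end MGraph
/-- connected loopless graphs with the same edge set and vertex
count, all of whose single-edge contractions are 2-isomorphic, are 2-isomorphic. -/
theorem twoIso_of_all_contractions_twoIso
    {V₁ V₂ α : Type} [DecidableEq V₁] [DecidableEq V₂] [DecidableEq α]
    [Fintype V₁] [Fintype V₂]
    (G₁ : MGraph V₁ α) (G₂ : MGraph V₂ α)
    (hc₁ : G₁.Connected) (hc₂ : G₂.Connected)
    (hl₁ : G₁.Loopless) (hl₂ : G₂.Loopless)
    (hE : G₁.E = G₂.E) (hV : Fintype.card V₁ = Fintype.card V₂)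
    (hcontr : ∀ e ∈ G₁.E, ∀ (u₁ v₁ : V₁) (u₂ v₂ : V₂),
      G₁.ends e = s(u₁, v₁) → G₂.ends e = s(u₂, v₂) →
      (G₁.contractLink e u₁ v₁).TwoIso (G₂.contractLink e u₂ v₂)) :
    G₁.TwoIso G₂ := by
  refine ⟨hE, ?_⟩
  have hcontr' : ∀ e ∈ G₂.E, ∀ (u₂ v₂ : V₂) (u₁ v₁ : V₁),
      G₂.ends e = s(u₂, v₂) → G₁.ends e = s(u₁, v₁) →
      (G₂.contractLink e u₂ v₂).TwoIso (G₁.contractLink e u₁ v₁) := by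
    intro e he u₂ v₂ u₁ v₁ h2 h1
    obtain ⟨hEc, hc⟩ := hcontr e (hE ▸ he) u₁ v₁ u₂ v₂ h1 h2
    exact ⟨hEc.symm, fun X => (hc X).symm⟩
  have key : ∀ n : ℕ, ∀ X : Finset α, X.card ≤ n →
      (G₁.IsCycle X → G₂.IsCycle X) ∧ (G₂.IsCycle X → G₁.IsCycle X) := by
    intro n
    induction n with
    | zero =>
      intro X hX
      have hXe : X = ∅ := Finset.card_eq_zero.1 (Nat.le_zero.1 hX)
      constructor <;> intro h <;>
        exact absurd h.1 (by rw [hXe]; exact Finset.not_nonempty_empty)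
    | succ n ih =>
      intro X hX
      constructor
      · intro h
        obtain ⟨e, he⟩ := h.1
        rcases MGraph.cycle_step G₁ G₂ hl₁ hl₂ hE hcontr h he with h2 | h2
        · exact h2
        · exfalso
          have hcard : (X.erase e).card ≤ n := by
            have := Finset.card_erase_of_mem he
            have := Finset.card_pos.2 ⟨e, he⟩
            omega
          have h1' := (ih _ hcard).2 h2
          have heq := MGraph.isCycle_subset_eq h h1' (Finset.erase_subset e X)
          exact Finset.notMem_erase e X (by rw [heq]; exact he)
      · intro h
        obtain ⟨e, he⟩ := h.1
        rcases MGraph.cycle_step G₂ G₁ hl₂ hl₁ hE.symm hcontr' h he with h2 | h2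
        · exact h2
        · exfalso
          have hcard : (X.erase e).card ≤ n := by
            have := Finset.card_erase_of_mem he
            have := Finset.card_pos.2 ⟨e, he⟩
            omega
          have h1' := (ih _ hcard).1 h2
          have heq := MGraph.isCycle_subset_eq h h1' (Finset.erase_subset e X)
          exact Finset.notMem_erase e X (by rw [heq]; exact he)
  intro X
  exact ⟨(key X.card X le_rfl).1, (key X.card X le_rfl).2⟩
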